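/- Let x ∈ ℂ with |λ| > 1 where λ = (x/2)(1 + sqrt(1 - 4/x²)) (principal square root), let A, B ∈ ℂ with sqrt(|AB|)/|λ| ≤ |A|, |B| ≤ sqrt(|AB|)·|λ|, and set yₙ = Aλⁿ + Bλ⁻ⁿ. If n > 0 and |λ|^{2n-1} ≥ (|λ|+1)/(|λ|-1), then |yₙ₊₁| ≥ |yₙ| and |y₋ₙ₋₁| ≥ |y₋ₙ|. -/

import Mathlib

/-- The principal square root of a complex number (nonnegative real part). -/
noncomputable def csqrt (z : ℂ) : ℂ := z ^ ((1 : ℂ) / 2)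

private lemma key_ineq (L a b s P : ℝ) (hL : 1 < L) (hs : 0 ≤ s) (hP : 0 < P)
    (ha : s / L ≤ a) (hb : b ≤ s * L) (hpow : L * (L + 1) ≤ P ^ 2 * (L - 1)) :
    a * P + b / P ≤ a * (P * L) - b / (P * L) := by
  have hL0 : (0:ℝ) < L := by linarith
  have hPL : (0:ℝ) < P * L := by positivity
  have h2 : b * (L + 1) ≤ a * P ^ 2 * L * (L - 1) := by
    have h3 : s / L * (P ^ 2 * L * (L - 1)) ≤ a * (P ^ 2 * L * (L - 1)) := by
      exact mul_le_mul_of_nonneg_right ha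
        (mul_pos (mul_pos (pow_pos hP 2) hL0) (sub_pos.mpr hL)).le
    have h4 : s / L * (P ^ 2 * L * (L - 1)) = s * (P ^ 2 * (L - 1)) := by
      field_simp
    nlinarith [mul_le_mul_of_nonneg_left hpow hs,
      mul_le_mul_of_nonneg_right hb (by linarith : (0:ℝ) ≤ L + 1)]
  have e : (a * (P * L) - b / (P * L)) - (a * P + b / P) =
      (a * P ^ 2 * L * (L - 1) - b * (L + 1)) / (P * L) := by
    field_simp; ring
  have : 0 ≤ (a * (P * L) - b / (P * L)) - (a * P + b / P) := by
    rw [e]; exact div_nonneg (by linarith) hPL.le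
  linarith

private lemma lower_bd (u v : ℂ) :
    ‖u‖ - ‖v‖ ≤ ‖u + v‖ := by
  have := norm_add_le (u + v) (-v)
  simpa using this

theorem eventual_growth (x A B l : ℂ) (n : ℕ) (hn : 0 < n)
    (hl : l = (x / 2) * (1 + csqrt (1 - 4 / x ^ 2)))
    (habs : 1 < ‖l‖)
    (hA1 : Real.sqrt (‖A * B‖) / ‖l‖ ≤ ‖A‖)
    (hA2 : ‖A‖ ≤ Real.sqrt (‖A * B‖) * ‖l‖)
    (hB1 : Real.sqrt (‖A * B‖) / ‖l‖ ≤ ‖B‖)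
    (hB2 : ‖B‖ ≤ Real.sqrt (‖A * B‖) * ‖l‖)
    (hpow : (‖l‖ + 1) / (‖l‖ - 1) ≤
      (‖l‖) ^ (2 * n - 1)) :
    ‖A * l ^ (n : ℤ) + B * l ^ (-(n : ℤ))‖ ≤
      ‖A * l ^ ((n : ℤ) + 1) + B * l ^ (-((n : ℤ) + 1))‖ ∧
    ‖A * l ^ (-(n : ℤ)) + B * l ^ (n : ℤ)‖ ≤
      ‖A * l ^ (-(n : ℤ) - 1) + B * l ^ ((n : ℤ) + 1)‖ := by
  set L := ‖l‖ with hLdef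
  have hL0 : (0:ℝ) < L := by linarith
  have hl0 : l ≠ 0 := by
    intro h; rw [hLdef, h] at habs; simp at habs; linarith
  set s := Real.sqrt (‖A * B‖) with hsdef
  have hs : 0 ≤ s := Real.sqrt_nonneg _
  set a := ‖A‖ with hadef
  set b := ‖B‖ with hbdef
  set P := L ^ n with hPdef
  have hP : 0 < P := pow_pos hL0 n
  -- convert hpow
  have hpow' : L * (L + 1) ≤ P ^ 2 * (L - 1) := by
    have h1 : L + 1 ≤ L ^ (2 * n - 1) * (L - 1) := by
      rw [div_le_iff₀ (by linarith)] at hpow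
      linarith
    have h2 : L ^ (2 * n - 1) * L = P ^ 2 := by
      rw [hPdef, ← pow_succ, ← pow_mul]
      congr 1; omega
    nlinarith [pow_pos hL0 (2 * n - 1)]
  -- abs of zpows
  have hzp : ∀ k : ℤ, ‖l ^ k‖ = L ^ k := fun k => norm_zpow l k
  have habsn : ‖l ^ (n:ℤ)‖ = P := by rw [hzp, zpow_natCast]
  have habsnn : ‖l ^ (-(n:ℤ))‖ = P⁻¹ := by
    rw [hzp, zpow_neg, zpow_natCast]
  have habsn1 : ‖l ^ ((n:ℤ) + 1)‖ = P * L := by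
    rw [hzp, zpow_add_one₀ (by positivity : L ≠ 0), zpow_natCast]
  have habsnn1 : ‖l ^ (-((n:ℤ) + 1))‖ = (P * L)⁻¹ := by
    rw [hzp, zpow_neg, zpow_add_one₀ (by positivity : L ≠ 0), zpow_natCast]
  have habsnn1' : ‖l ^ (-(n:ℤ) - 1)‖ = (P * L)⁻¹ := by
    have : -(n:ℤ) - 1 = -((n:ℤ) + 1) := by ring
    rw [this]; exact habsnn1
  constructor
  · have hub : ‖A * l ^ (n:ℤ) + B * l ^ (-(n:ℤ))‖ ≤ a * P + b / P := by
      calc ‖A * l ^ (n:ℤ) + B * l ^ (-(n:ℤ))‖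
          ≤ ‖A * l ^ (n:ℤ)‖ + ‖B * l ^ (-(n:ℤ))‖ :=
            norm_add_le _ _
        _ = a * P + b / P := by
            rw [norm_mul, norm_mul, habsn, habsnn, div_eq_mul_inv]
    have hlb : a * (P * L) - b / (P * L) ≤
        ‖A * l ^ ((n:ℤ) + 1) + B * l ^ (-((n:ℤ) + 1))‖ := by
      have := lower_bd (A * l ^ ((n:ℤ) + 1)) (B * l ^ (-((n:ℤ) + 1)))
      rw [norm_mul, norm_mul, habsn1, habsnn1] at this
      calc a * (P * L) - b / (P * L) = a * (P * L) - b * (P * L)⁻¹ := by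
            rw [div_eq_mul_inv]
        _ ≤ _ := this
    have := key_ineq L a b s P habs hs hP hA1 hB2 hpow'
    linarith
  · have hub : ‖A * l ^ (-(n:ℤ)) + B * l ^ (n:ℤ)‖ ≤ b * P + a / P := by
      calc ‖A * l ^ (-(n:ℤ)) + B * l ^ (n:ℤ)‖
          ≤ ‖A * l ^ (-(n:ℤ))‖ + ‖B * l ^ (n:ℤ)‖ :=
            norm_add_le _ _
        _ = b * P + a / P := by
            rw [norm_mul, norm_mul, habsn, habsnn, div_eq_mul_inv]; ring
    have hlb : b * (P * L) - a / (P * L) ≤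
        ‖A * l ^ (-(n:ℤ) - 1) + B * l ^ ((n:ℤ) + 1)‖ := by
      have h := lower_bd (B * l ^ ((n:ℤ) + 1)) (A * l ^ (-(n:ℤ) - 1))
      rw [norm_mul, norm_mul, habsn1, habsnn1'] at h
      have hcomm : B * l ^ ((n:ℤ) + 1) + A * l ^ (-(n:ℤ) - 1) =
          A * l ^ (-(n:ℤ) - 1) + B * l ^ ((n:ℤ) + 1) := by ring
      rw [hcomm] at h
      calc b * (P * L) - a / (P * L) = b * (P * L) - a * (P * L)⁻¹ := by
            rw [div_eq_mul_inv]
        _ ≤ _ := h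
    have := key_ineq L b a s P habs hs hP hB1 hA2 hpow'
    linarith
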